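/- Let M be a matroid on ground set V, and let A₁, ..., Aₘ be subsets of V. If rank(⋃_{i∈I} Aᵢ) ≥ |I| for every I ⊆ [m], then there exist pairwise distinct elements aᵢ ∈ Aᵢ, one for each i ∈ [m], such that {a₁, ..., aₘ} is independent in M. -/

import Mathlib

/-- The rank of a set `X` in a matroid `M`: the largest size of an independent
subset of `X`. -/
noncomputable def Matroid.setRk {α : Type*} (M : Matroid α) (X : Set α) : ℕ :=
  sSup {n : ℕ | ∃ I, M.Indep I ∧ I ⊆ X ∧ I.ncard = n}

namespace RadoAux

open Set Matroid

variable {α : Type*} {M : Matroid α} [M.Finite] {X Y I J : Set α}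

lemma bdd (X : Set α) : BddAbove {n : ℕ | ∃ I, M.Indep I ∧ I ⊆ X ∧ I.ncard = n} := by
  refine ⟨M.E.ncard, fun n hn => ?_⟩
  obtain ⟨I, hI, -, rfl⟩ := hn
  exact Set.ncard_le_ncard hI.subset_ground M.ground_finite

lemma le_setRk (hI : M.Indep I) (hIX : I ⊆ X) : I.ncard ≤ M.setRk X :=
  le_csSup (bdd X) ⟨I, hI, hIX, rfl⟩

lemma setRk_le {n : ℕ} (h : ∀ I, M.Indep I → I ⊆ X → I.ncard ≤ n) : M.setRk X ≤ n :=
  csSup_le ⟨0, ∅, M.empty_indep, Set.empty_subset X, by simp⟩ (by rintro k ⟨I, hI, hIX, rfl⟩; exact h I hI hIX)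

lemma ncard_le_of_basis (hJ : M.IsBasis J X) (hI : M.Indep I) (hIX : I ⊆ X) :
    I.ncard ≤ J.ncard := by
  by_contra hlt
  push_neg at hlt
  have hJf := hJ.indep.finite
  have hIf := hI.finite
  have : J.encard < I.encard := by
    rw [← hJf.cast_ncard_eq, ← hIf.cast_ncard_eq]
    exact_mod_cast hlt
  obtain ⟨e, he, hins⟩ := hJ.indep.augment hI this
  exact hJ.isBasis'.insert_not_indep ⟨hIX he.1, he.2⟩ hins

lemma setRk_eq_of_basis (hJ : M.IsBasis J X) : M.setRk X = J.ncard :=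
  le_antisymm (setRk_le fun I hI hIX => ncard_le_of_basis hJ hI hIX)
    (le_setRk hJ.indep hJ.subset)

lemma exists_indep_setRk (hX : X ⊆ M.E) :
    ∃ I, M.Indep I ∧ I ⊆ X ∧ I.ncard = M.setRk X := by
  obtain ⟨J, hJ⟩ := M.exists_isBasis X hX
  exact ⟨J, hJ.indep, hJ.subset, (setRk_eq_of_basis hJ).symm⟩

lemma setRk_mono (hXY : X ⊆ Y) (hY : Y ⊆ M.E) : M.setRk X ≤ M.setRk Y := by
  obtain ⟨I, hI, hIX, hcard⟩ := exists_indep_setRk (hXY.trans hY)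
  rw [← hcard]
  exact le_setRk hI (hIX.trans hXY)

lemma setRk_submod (hX : X ⊆ M.E) (hY : Y ⊆ M.E) :
    M.setRk (X ∪ Y) + M.setRk (X ∩ Y) ≤ M.setRk X + M.setRk Y := by
  obtain ⟨I, hI⟩ := M.exists_isBasis (X ∩ Y) (inter_subset_left.trans hX)
  obtain ⟨J, hJ, hIJ⟩ := hI.indep.subset_isBasis_of_subset
    (hI.subset.trans (inter_subset_left.trans subset_union_left)) (union_subset hX hY)
  have hJf : J.Finite := hJ.indep.finite
  have h1 : M.setRk X ≥ (J ∩ X).ncard := le_setRk (hJ.indep.subset inter_subset_left) inter_subset_right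
  have h2 : M.setRk Y ≥ (J ∩ Y).ncard := le_setRk (hJ.indep.subset inter_subset_left) inter_subset_right
  have hkey : (J ∩ X).ncard + (J ∩ Y).ncard = J.ncard + (J ∩ (X ∩ Y)).ncard := by
    have e1 : (J ∩ X) ∪ (J ∩ Y) = J := by
      rw [← inter_union_distrib_left, inter_eq_self_of_subset_left hJ.subset]
    have e2 : (J ∩ X) ∩ (J ∩ Y) = J ∩ (X ∩ Y) := by
      ext x; simp only [mem_inter_iff]; tauto
    rw [← Set.ncard_union_add_ncard_inter (J ∩ X) (J ∩ Y) (hJf.subset inter_subset_left)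
      (hJf.subset inter_subset_left), e1, e2]
  have h3 : M.setRk (X ∪ Y) = J.ncard := setRk_eq_of_basis hJ
  have h4 : M.setRk (X ∩ Y) ≤ (J ∩ (X ∩ Y)).ncard := by
    rw [setRk_eq_of_basis hI]
    exact Set.ncard_le_ncard (subset_inter hIJ hI.subset) (hJf.subset inter_subset_left)
  omega

end RadoAux

namespace RadoAux2
open Set Matroid RadoAux

variable {α : Type*} {M : Matroid α} [M.Finite] {m : ℕ}

lemma nonempty_of_hyp (A : Fin m → Set α) (hA : ∀ i, A i ⊆ M.E)
    (hyp : ∀ I : Finset (Fin m), (I.card : ℕ) ≤ M.setRk (⋃ i ∈ I, A i)) (i : Fin m) :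
    (A i).Nonempty := by
  have h := hyp {i}
  simp only [Finset.card_singleton, Finset.mem_singleton, Set.iUnion_iUnion_eq_left] at h
  obtain ⟨K, hK, hKA, hcard⟩ := exists_indep_setRk (hA i)
  have : 0 < K.ncard := by omega
  obtain ⟨x, hx⟩ := (Set.ncard_pos hK.finite).mp this
  exact ⟨x, hKA hx⟩

lemma rado_singletons (A : Fin m → Set α) (hA : ∀ i, A i ⊆ M.E)
    (hyp : ∀ I : Finset (Fin m), (I.card : ℕ) ≤ M.setRk (⋃ i ∈ I, A i))
    (h1 : ∀ i, (A i).ncard ≤ 1) :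
    ∃ a : Fin m → α, Function.Injective a ∧ (∀ i, a i ∈ A i) ∧
      M.Indep (Set.range a) := by
  classical
  have hfin : ∀ i, (A i).Finite := fun i => M.ground_finite.subset (hA i)
  have hsingle : ∀ i, ∃ x, A i = {x} := fun i =>
    Set.ncard_eq_one.mp (le_antisymm (h1 i)
      ((Set.ncard_pos (hfin i)).mpr (nonempty_of_hyp A hA hyp i)))
  choose a ha using hsingle
  have hmem : ∀ i, a i ∈ A i := fun i => by rw [ha i]; exact rfl
  have hrange : (⋃ i ∈ (Finset.univ : Finset (Fin m)), A i) = Set.range a := by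
    ext z
    simp [ha, eq_comm]
  have hsub : Set.range a ⊆ M.E := Set.range_subset_iff.mpr fun i => hA i (hmem i)
  have h := hyp Finset.univ
  rw [hrange, Finset.card_univ, Fintype.card_fin] at h
  obtain ⟨K, hK, hKr, hKcard⟩ := exists_indep_setRk hsub
  have hreq : Set.range a = ↑(Finset.univ.image a) := by
    rw [Finset.coe_image, Finset.coe_univ, Set.image_univ]
  have hrle : (Set.range a).ncard ≤ m := by
    rw [hreq, Set.ncard_coe_finset]
    exact le_trans (Finset.card_image_le) (by simp)
  have hKeq : K = Set.range a :=
    Set.eq_of_subset_of_ncard_le hKr (by omega) (Set.finite_range a)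
  refine ⟨a, ?_, hmem, hKeq ▸ hK⟩
  have hcardim : (Finset.univ.image a).card = (Finset.univ : Finset (Fin m)).card := by
    have : (Set.range a).ncard = m := le_antisymm hrle (by rw [← hKeq]; omega)
    rw [hreq, Set.ncard_coe_finset] at this
    simp [this]
  have := Finset.card_image_iff.mp hcardim
  rw [Finset.coe_univ] at this
  exact Set.injOn_univ.mp this

end RadoAux2

namespace RadoAux3
open Set Matroid RadoAux RadoAux2

variable {α : Type*} {M : Matroid α} [M.Finite] {m : ℕ}

lemma rado_aux (n : ℕ) :
    ∀ (A : Fin m → Set α), (∑ i, (A i).ncard) ≤ n → (∀ i, A i ⊆ M.E) →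
    (∀ I : Finset (Fin m), (I.card : ℕ) ≤ M.setRk (⋃ i ∈ I, A i)) →
    ∃ a : Fin m → α, Function.Injective a ∧ (∀ i, a i ∈ A i) ∧
      M.Indep (Set.range a) := by
  classical
  induction n with
  | zero =>
    intro A hsum hA hyp
    refine rado_singletons A hA hyp fun i => ?_
    have : (A i).ncard ≤ ∑ i, (A i).ncard :=
      Finset.single_le_sum (f := fun i => (A i).ncard) (fun i _ => Nat.zero_le _)
        (Finset.mem_univ i)
    omega
  | succ n ih =>
    intro A hsum hA hyp
    by_cases h1 : ∀ i, (A i).ncard ≤ 1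
    · exact rado_singletons A hA hyp h1
    push_neg at h1
    obtain ⟨j, hj⟩ := h1
    have hjfin : (A j).Finite := M.ground_finite.subset (hA j)
    obtain ⟨x, y, hx, hy, hxy⟩ := (Set.one_lt_ncard_iff hjfin).mp hj
    -- the two candidate reduced systems
    have key : ∀ z ∈ A j,
        (∀ I : Finset (Fin m),
          (I.card : ℕ) ≤ M.setRk (⋃ i ∈ I, Function.update A j (A j \ {z}) i)) →
        ∃ a : Fin m → α, Function.Injective a ∧ (∀ i, a i ∈ A i) ∧
          M.Indep (Set.range a) := by
      intro z hz hyp'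
      set A1 := Function.update A j (A j \ {z}) with hA1def
      have hsub1 : ∀ i, A1 i ⊆ A i := by
        intro i
        by_cases h : i = j
        · subst h; rw [hA1def, Function.update_self]; exact diff_subset
        · rw [hA1def, Function.update_of_ne h]
      have hA1 : ∀ i, A1 i ⊆ M.E := fun i => (hsub1 i).trans (hA i)
      have hsum1 : ∑ i, (A1 i).ncard ≤ n := by
        have heq : (fun i => (A1 i).ncard) =
            Function.update (fun i => (A i).ncard) j ((A j \ {z}).ncard) := by
          ext i
          by_cases h : i = j
          · subst h; simp [hA1def]
          · simp [hA1def, Function.update_of_ne h]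
        have h2 : ∑ i, (A1 i).ncard =
            (A j \ {z}).ncard + ∑ i ∈ Finset.univ \ {j}, (A i).ncard := by
          rw [show ∑ i, (A1 i).ncard = ∑ i, Function.update
              (fun i => (A i).ncard) j ((A j \ {z}).ncard) i by rw [← heq]]
          exact Finset.sum_update_of_mem (Finset.mem_univ j) _ _
        have h3 : ∑ i, (A i).ncard =
            (A j).ncard + ∑ i ∈ Finset.univ \ {j}, (A i).ncard := by
          rw [show ∑ i, (A i).ncard = ∑ i, Function.update
              (fun i => (A i).ncard) j ((A j).ncard) i by
            congr 1; ext i; by_cases h : i = j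
            · subst h; simp
            · simp [Function.update_of_ne h]]
          exact Finset.sum_update_of_mem (Finset.mem_univ j) _ _
        have h4 : (A j \ {z}).ncard = (A j).ncard - 1 :=
          Set.ncard_diff_singleton_of_mem hz
        omega
      obtain ⟨a, hinj, hmem, hind⟩ := ih A1 hsum1 hA1 hyp'
      exact ⟨a, hinj, fun i => hsub1 i (hmem i), hind⟩
    -- one of the two reduced systems satisfies the rank condition
    have main : (∀ I : Finset (Fin m),
          (I.card : ℕ) ≤ M.setRk (⋃ i ∈ I, Function.update A j (A j \ {x}) i)) ∨
        (∀ I : Finset (Fin m),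
          (I.card : ℕ) ≤ M.setRk (⋃ i ∈ I, Function.update A j (A j \ {y}) i)) := by
      by_contra hcon
      push_neg at hcon
      obtain ⟨⟨I, hI⟩, ⟨J, hJ⟩⟩ := hcon
      set A1 := Function.update A j (A j \ {x}) with hA1def
      set A2 := Function.update A j (A j \ {y}) with hA2def
      set X := ⋃ i ∈ I, A1 i with hXdef
      set Y := ⋃ i ∈ J, A2 i with hYdef
      -- if j ∉ I then X is the original union, contradicting hyp
      have hjI : j ∈ I := by
        by_contra hjI
        have : X = ⋃ i ∈ I, A i := by
          apply Set.iUnion₂_congr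
          intro i hi
          rw [hA1def, Function.update_of_ne (by rintro rfl; exact hjI hi)]
        rw [this] at hI
        exact absurd (hyp I) (by omega)
      have hjJ : j ∈ J := by
        by_contra hjJ
        have : Y = ⋃ i ∈ J, A i := by
          apply Set.iUnion₂_congr
          intro i hi
          rw [hA2def, Function.update_of_ne (by rintro rfl; exact hjJ hi)]
        rw [this] at hJ
        exact absurd (hyp J) (by omega)
      have hsub1 : ∀ i, A1 i ⊆ A i := by
        intro i; by_cases h : i = j
        · subst h; rw [hA1def, Function.update_self]; exact diff_subset
        · rw [hA1def, Function.update_of_ne h]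
      have hsub2 : ∀ i, A2 i ⊆ A i := by
        intro i; by_cases h : i = j
        · subst h; rw [hA2def, Function.update_self]; exact diff_subset
        · rw [hA2def, Function.update_of_ne h]
      have hXE : X ⊆ M.E := iUnion₂_subset fun i _ => (hsub1 i).trans (hA i)
      have hYE : Y ⊆ M.E := iUnion₂_subset fun i _ => (hsub2 i).trans (hA i)
      -- union bound
      have hsup : (⋃ i ∈ I ∪ J, A i) ⊆ X ∪ Y := by
        intro w hw
        simp only [Set.mem_iUnion, exists_prop, Finset.mem_union] at hw
        obtain ⟨i, hi, hwi⟩ := hw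
        by_cases h : i = j
        · subst h
          by_cases hwx : w = x
          · subst hwx
            refine Or.inr ?_
            simp only [hYdef, Set.mem_iUnion, exists_prop]
            exact ⟨i, hjJ, by rw [hA2def, Function.update_self]; exact ⟨hwi, hxy⟩⟩
          · refine Or.inl ?_
            simp only [hXdef, Set.mem_iUnion, exists_prop]
            exact ⟨i, hjI, by rw [hA1def, Function.update_self]; exact ⟨hwi, hwx⟩⟩
        · rcases hi with hi | hi
          · refine Or.inl ?_
            simp only [hXdef, Set.mem_iUnion, exists_prop]
            exact ⟨i, hi, by rw [hA1def, Function.update_of_ne h]; exact hwi⟩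
          · refine Or.inr ?_
            simp only [hYdef, Set.mem_iUnion, exists_prop]
            exact ⟨i, hi, by rw [hA2def, Function.update_of_ne h]; exact hwi⟩
      -- intersection bound
      have hcap : (⋃ i ∈ (I ∩ J).erase j, A i) ⊆ X ∩ Y := by
        intro w hw
        simp only [Set.mem_iUnion, exists_prop, Finset.mem_erase, Finset.mem_inter] at hw
        obtain ⟨i, ⟨hij, hiI, hiJ⟩, hwi⟩ := hw
        constructor
        · simp only [hXdef, Set.mem_iUnion, exists_prop]
          exact ⟨i, hiI, by rw [hA1def, Function.update_of_ne hij]; exact hwi⟩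
        · simp only [hYdef, Set.mem_iUnion, exists_prop]
          exact ⟨i, hiJ, by rw [hA2def, Function.update_of_ne hij]; exact hwi⟩
      have c1 : ((I ∪ J).card : ℕ) ≤ M.setRk (X ∪ Y) :=
        le_trans (hyp (I ∪ J)) (setRk_mono hsup (union_subset hXE hYE))
      have c2 : (((I ∩ J).erase j).card : ℕ) ≤ M.setRk (X ∩ Y) :=
        le_trans (hyp ((I ∩ J).erase j))
          (setRk_mono hcap (inter_subset_left.trans hXE))
      have c3 : ((I ∩ J).erase j).card = (I ∩ J).card - 1 :=
        Finset.card_erase_of_mem (Finset.mem_inter.mpr ⟨hjI, hjJ⟩)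
      have c4 := setRk_submod hXE hYE
      have c5 : (I ∪ J).card + (I ∩ J).card = I.card + J.card :=
        Finset.card_union_add_card_inter I J
      have c6 : 1 ≤ (I ∩ J).card :=
        Finset.card_pos.mpr ⟨j, Finset.mem_inter.mpr ⟨hjI, hjJ⟩⟩
      omega
    rcases main with h | h
    · exact key x hx h
    · exact key y hy h

end RadoAux3


/-- Rado's theorem: if `rank(⋃_{i ∈ I} A i) ≥ |I|` for every `I ⊆ [m]`, then
the sets `A 1, …, A m` have an independent transversal. -/
theorem rado {α : Type*} {M : Matroid α} [M.Finite] {m : ℕ}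
    (A : Fin m → Set α) (hA : ∀ i, A i ⊆ M.E)
    (hyp : ∀ I : Finset (Fin m), (I.card : ℕ) ≤ M.setRk (⋃ i ∈ I, A i)) :
    ∃ a : Fin m → α, Function.Injective a ∧ (∀ i, a i ∈ A i) ∧
      M.Indep (Set.range a) := by
  exact RadoAux3.rado_aux (∑ i, (A i).ncard) A le_rfl hA hyp
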